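/- Let (E₁, τ₁) and (E₂, τ₂) be locally solid Riesz spaces, each possessing an order bounded neighborhood of zero. Then a linear operator T : E₁ → E₂ is order bounded if and only if it is topologically bounded; that is, L_B(E₁, E₂) = L_TB(E₁, E₂). -/

import Mathlib

open Filter Topology Bornology Set

/-- A subset of a Riesz space is solid if `|x| ≤ |y|` and `y ∈ S` imply `x ∈ S`. -/
def SolidSet {E : Type*} [Lattice E] [AddCommGroup E] (S : Set E) : Prop :=
  ∀ ⦃x y : E⦄, |x| ≤ |y| → y ∈ S → x ∈ S

/-- A linear topology on a Riesz space is locally solid if the neighborhood filter at zero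
has a basis of solid sets. -/
def LocallySolid (E : Type*) [Lattice E] [AddCommGroup E] [TopologicalSpace E] : Prop :=
  (𝓝 (0 : E)).HasBasis (fun S : Set E => S ∈ 𝓝 (0 : E) ∧ SolidSet S) id

section Aux

variable {E : Type*} [AddCommGroup E] [Lattice E] [Module ℝ E]
    [CovariantClass E E (· + ·) (· ≤ ·)] [PosSMulMono ℝ E]

lemma aux_abs_smul_le (r : ℝ) (x : E) : |r • x| ≤ |r| • |x| := by
  have key : ∀ (s : ℝ), 0 ≤ s → |s • x| ≤ s • |x| := by
    intro s hs
    refine abs_le'.2 ⟨smul_le_smul_of_nonneg_left (le_abs_self x) hs, ?_⟩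
    rw [← smul_neg]
    exact smul_le_smul_of_nonneg_left (neg_le_abs x) hs
  rcases le_total 0 r with hr | hr
  · rw [abs_of_nonneg hr]; exact key r hr
  · have : r • x = -((-r) • x) := by rw [neg_smul, neg_neg]
    rw [this, abs_neg, abs_of_nonpos hr]
    exact key (-r) (by linarith)

lemma aux_abs_le_of_mem_Icc {a b x : E} (h : x ∈ Set.Icc a b) : |x| ≤ |a| ⊔ |b| := by
  refine abs_le'.2 ⟨h.2.trans ((le_abs_self b).trans le_sup_right), ?_⟩
  have h1 : -x ≤ -a := neg_le_neg_iff.mpr h.1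
  exact h1.trans ((neg_le_abs a).trans le_sup_left)

variable [TopologicalSpace E] [IsTopologicalAddGroup E] [ContinuousSMul ℝ E]

/-- In a locally solid space every order bounded set is topologically bounded. -/
lemma aux_orderBounded_vonN (hls : LocallySolid E) {B : Set E}
    (h : ∃ a b : E, B ⊆ Set.Icc a b) : Bornology.IsVonNBounded ℝ B := by
  obtain ⟨a, b, hB⟩ := h
  intro V hV
  obtain ⟨S, ⟨hS, hSsolid⟩, hSV⟩ := hls.mem_iff.mp hV
  refine Absorbs.mono_left ?_ hSV
  set u : E := |a| ⊔ |b| with hu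
  have htend : Filter.Tendsto (fun r : ℝ => r • u) (𝓝 0) (𝓝 (0 : E)) := by
    have := (show Continuous (fun r : ℝ => r • u) from continuous_id.smul (continuous_const (y := u))).tendsto (0 : ℝ)
    simpa using this
  have hev : ∀ᶠ r : ℝ in 𝓝 0, r • u ∈ S := htend.eventually_mem hS
  obtain ⟨ε, hε, hball⟩ := Metric.eventually_nhds_iff_ball.mp hev
  rw [absorbs_iff_norm]
  refine ⟨2 / ε, fun c hc => fun x hx => ?_⟩
  have hc0 : c ≠ 0 := by
    intro h0
    rw [h0, norm_zero] at hc
    have : (0:ℝ) < 2 / ε := by positivity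
    linarith
  refine ⟨c⁻¹ • x, ?_, smul_inv_smul₀ hc0 x⟩
  have hcinv : |c⁻¹| < ε := by
    have h2 : (0:ℝ) < 2 / ε := by positivity
    have hcpos : 0 < |c| := lt_of_lt_of_le h2 hc
    rw [abs_inv]
    rw [inv_lt_comm₀ hcpos hε]
    calc ε⁻¹ < 2 / ε := by rw [div_eq_mul_inv]; nlinarith [inv_pos.mpr hε]
      _ ≤ |c| := hc
  have hmem : |c⁻¹| • u ∈ S := by
    apply hball
    simpa [Real.dist_eq] using lt_of_le_of_lt (abs_abs c⁻¹).le hcinv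
  refine hSsolid ?_ hmem
  have h1 : |c⁻¹ • x| ≤ |c⁻¹| • u :=
    (aux_abs_smul_le c⁻¹ x).trans
      (smul_le_smul_of_nonneg_left (aux_abs_le_of_mem_Icc (hB hx)) (abs_nonneg _))
  have h2 : |(|c⁻¹| • u)| = |c⁻¹| • u :=
    abs_of_nonneg (smul_nonneg (abs_nonneg _) (le_trans (abs_nonneg a) le_sup_left))
  rwa [h2]

/-- If there is an order bounded neighborhood of zero, every topologically bounded set
is order bounded. -/
lemma aux_vonN_orderBounded
    (hV : ∃ V ∈ 𝓝 (0 : E), ∃ a b : E, V ⊆ Set.Icc a b) {B : Set E}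
    (h : Bornology.IsVonNBounded ℝ B) : ∃ a b : E, B ⊆ Set.Icc a b := by
  obtain ⟨V, hV0, a, b, hab⟩ := hV
  obtain ⟨c, hc⟩ := (h hV0).exists
  refine ⟨-(|c| • (|a| ⊔ |b|)), |c| • (|a| ⊔ |b|), fun x hx => ?_⟩
  obtain ⟨v, hv, rfl⟩ := hc hx
  have hxabs : |c • v| ≤ |c| • (|a| ⊔ |b|) :=
    (aux_abs_smul_le c v).trans
      (smul_le_smul_of_nonneg_left (aux_abs_le_of_mem_Icc (hab hv)) (abs_nonneg _))
  exact ⟨le_trans (neg_le_neg_iff.mpr hxabs) (neg_le.mpr (neg_le_abs _)),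
    (le_abs_self _).trans hxabs⟩

end Aux

/-- If `E₁` and `E₂` are locally solid Riesz spaces each possessing an order bounded
neighborhood of zero, then a linear operator `T : E₁ → E₂` is order bounded iff it is
topologically bounded. -/
theorem stmt11 {E₁ E₂ : Type*}
    [AddCommGroup E₁] [Lattice E₁] [Module ℝ E₁]
    [CovariantClass E₁ E₁ (· + ·) (· ≤ ·)] [PosSMulMono ℝ E₁]
    [TopologicalSpace E₁] [IsTopologicalAddGroup E₁] [ContinuousSMul ℝ E₁]
    [AddCommGroup E₂] [Lattice E₂] [Module ℝ E₂]
    [CovariantClass E₂ E₂ (· + ·) (· ≤ ·)] [PosSMulMono ℝ E₂]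
    [TopologicalSpace E₂] [IsTopologicalAddGroup E₂] [ContinuousSMul ℝ E₂]
    (hls₁ : LocallySolid E₁) (hls₂ : LocallySolid E₂)
    (hV₁ : ∃ V ∈ 𝓝 (0 : E₁), ∃ a b : E₁, V ⊆ Set.Icc a b)
    (hV₂ : ∃ V ∈ 𝓝 (0 : E₂), ∃ a b : E₂, V ⊆ Set.Icc a b)
    (T : E₁ →ₗ[ℝ] E₂) :
    (∀ B : Set E₁, (∃ a b : E₁, B ⊆ Set.Icc a b) →
        ∃ a b : E₂, T '' B ⊆ Set.Icc a b) ↔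
    (∀ B : Set E₁, Bornology.IsVonNBounded ℝ B →
        Bornology.IsVonNBounded ℝ (T '' B)) := by
  constructor
  · intro hT B hB
    exact aux_orderBounded_vonN hls₂ (hT B (aux_vonN_orderBounded hV₁ hB))
  · intro hT B hB
    exact aux_vonN_orderBounded hV₂ (hT B (aux_orderBounded_vonN hls₁ hB))
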